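/- Assume f̄ < f(1). Then there exists ε ∈ (0, 1/2) such that for all t ∈ [0,∞) with ∅ ≠ I^{Θ(t)} ⊆ [1−ε, 1] and Θ₃(t) ≤ 0 it holds that (d/dt) |Θ₃(t)|² ≤ 0. -/

import Mathlib

open MeasureTheory Real Set
open scoped RealInnerProductSpace

/-- The mean value `f̄ = ∫₀¹ f(x) dx` of the target function. -/
noncomputable def fbar (f : ℝ → ℝ) : ℝ := ∫ s in (0:ℝ)..1, f s

/-- `m(θ) = ∫₀¹ max{θ₁ s + θ₂, 0} ds`. -/
noncomputable def mfun (θ : EuclideanSpace ℝ (Fin 3)) : ℝ :=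
  ∫ s in (0:ℝ)..1, max (θ 0 * s + θ 1) 0

/-- The risk function `𝓛`. -/
noncomputable def riskL (f : ℝ → ℝ) (θ : EuclideanSpace ℝ (Fin 3)) : ℝ :=
  ∫ s in (0:ℝ)..1, (θ 2 * (max (θ 0 * s + θ 1) 0 - mfun θ) + fbar f - f s) ^ 2

/-- `g(θ) = θ₁² + θ₂²`; the manifold `ℳ` is `g⁻¹(1)`. -/
noncomputable def gfun (θ : EuclideanSpace ℝ (Fin 3)) : ℝ := θ 0 ^ 2 + θ 1 ^ 2

/-- The activity interval `I^θ = {s ∈ [0,1] : θ₁ s + θ₂ > 0}`. -/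
def Iact (θ : EuclideanSpace ℝ (Fin 3)) : Set ℝ :=
  {s ∈ Set.Icc (0:ℝ) 1 | 0 < θ 0 * s + θ 1}


abbrev E3 := EuclideanSpace ℝ (Fin 3)
noncomputable def e2 : E3 := EuclideanSpace.single 2 (1:ℝ)
noncomputable def sigma3 (θ : E3) (s : ℝ) : ℝ := max (θ 0 * s + θ 1) 0
noncomputable def Afun (θ : E3) : ℝ := ∫ s in (0:ℝ)..1, (sigma3 θ s - mfun θ)^2
noncomputable def Bfun (f : ℝ → ℝ) (θ : E3) : ℝ :=
  ∫ s in (0:ℝ)..1, sigma3 θ s * (fbar f - f s)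
noncomputable def Dfun (f : ℝ → ℝ) (θ : E3) : ℝ := 2 * θ 2 * Afun θ + 2 * Bfun f θ
lemma sigma3_cont (θ : E3) : Continuous (sigma3 θ) := by
  unfold sigma3; fun_prop

lemma uIcc01 : uIcc (0:ℝ) 1 = Icc 0 1 := uIcc_of_le (by norm_num)

lemma coords (θ : E3) (u : ℝ) :
    (θ + u • e2) 0 = θ 0 ∧ (θ + u • e2) 1 = θ 1 ∧ (θ + u • e2) 2 = θ 2 + u := by
  refine ⟨?_, ?_, ?_⟩ <;> simp [e2, EuclideanSpace.single_apply]

lemma mfun_shift (θ : E3) (u : ℝ) : mfun (θ + u • e2) = mfun θ := by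
  unfold mfun
  rw [(coords θ u).1, (coords θ u).2.1]

section
variable (f : ℝ → ℝ) (θ : E3)

lemma integral_fbar_sub (hf : ContinuousOn f (Icc 0 1)) :
    ∫ s in (0:ℝ)..1, (fbar f - f s) = 0 := by
  have hfi : IntervalIntegrable f volume 0 1 := by
    apply ContinuousOn.intervalIntegrable; rwa [uIcc01]
  rw [intervalIntegral.integral_sub intervalIntegrable_const hfi]
  simp [fbar]

lemma riskL_expand (hf : ContinuousOn f (Icc 0 1)) (u : ℝ) :
    riskL f (θ + u • e2) = riskL f θ + Dfun f θ * u + Afun θ * u^2 := by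
  have hfi : IntervalIntegrable f volume 0 1 := by
    apply ContinuousOn.intervalIntegrable; rwa [uIcc01]
  have hσc : Continuous (sigma3 θ) := sigma3_cont θ
  have hcC : ContinuousOn (fun s => sigma3 θ s * (θ 2 * (sigma3 θ s - mfun θ) + fbar f - f s))
      (Icc 0 1) := by
    exact hσc.continuousOn.mul ((((hσc.continuousOn.sub continuousOn_const)|>.const_smul (θ 2)).add
      continuousOn_const).sub hf)
  have hc0 : ContinuousOn (fun s => θ 2 * (sigma3 θ s - mfun θ) + fbar f - f s) (Icc 0 1) :=
    (((hσc.continuousOn.sub continuousOn_const)|>.const_smul (θ 2)).add continuousOn_const).sub hf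
  have I1 : IntervalIntegrable (fun s => (θ 2 * (sigma3 θ s - mfun θ) + fbar f - f s)^2)
      volume 0 1 := by
    apply ContinuousOn.intervalIntegrable; rw [uIcc01]; exact hc0.pow 2
  have I2 : IntervalIntegrable
      (fun s => 2*(sigma3 θ s - mfun θ)*(θ 2 * (sigma3 θ s - mfun θ) + fbar f - f s))
      volume 0 1 := by
    apply ContinuousOn.intervalIntegrable; rw [uIcc01]
    exact (continuousOn_const.mul (hσc.continuousOn.sub continuousOn_const)).mul hc0
  have I3 : IntervalIntegrable (fun s => (sigma3 θ s - mfun θ)^2) volume 0 1 :=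
    ((hσc.sub continuous_const).pow 2).intervalIntegrable 0 1
  -- step 1: rewrite riskL at shifted point
  have step1 : riskL f (θ + u • e2)
      = ∫ s in (0:ℝ)..1, ((θ 2 + u) * (sigma3 θ s - mfun θ) + fbar f - f s)^2 := by
    unfold riskL
    rw [mfun_shift θ u, (coords θ u).1, (coords θ u).2.1, (coords θ u).2.2]
    rfl
  have step2 : (fun s => ((θ 2 + u) * (sigma3 θ s - mfun θ) + fbar f - f s)^2)
      = fun s => (θ 2 * (sigma3 θ s - mfun θ) + fbar f - f s)^2
        + (u * (2*(sigma3 θ s - mfun θ)*(θ 2 * (sigma3 θ s - mfun θ) + fbar f - f s))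
        + u^2 * (sigma3 θ s - mfun θ)^2) := by
    funext s; ring
  rw [step1, step2, intervalIntegral.integral_add I1 ((I2.const_mul u).add (I3.const_mul (u^2))),
    intervalIntegral.integral_add (I2.const_mul u) (I3.const_mul (u^2)),
    intervalIntegral.integral_const_mul, intervalIntegral.integral_const_mul]
  -- now identify pieces
  have hD : ∫ s in (0:ℝ)..1,
      2*(sigma3 θ s - mfun θ)*(θ 2 * (sigma3 θ s - mfun θ) + fbar f - f s) = Dfun f θ := by
    have hpt : (fun s => 2*(sigma3 θ s - mfun θ)*(θ 2 * (sigma3 θ s - mfun θ) + fbar f - f s))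
        = fun s => (2 * θ 2) * (sigma3 θ s - mfun θ)^2
          + (2 * (sigma3 θ s * (fbar f - f s)) + (-(2 * mfun θ)) * (fbar f - f s)) := by
      funext s; ring
    have IB : IntervalIntegrable (fun s => sigma3 θ s * (fbar f - f s)) volume 0 1 := by
      apply ContinuousOn.intervalIntegrable; rw [uIcc01]
      exact hσc.continuousOn.mul (continuousOn_const.sub hf)
    have If : IntervalIntegrable (fun s => fbar f - f s) volume 0 1 :=
      intervalIntegrable_const.sub hfi
    rw [hpt, intervalIntegral.integral_add (I3.const_mul _)
        ((IB.const_mul 2).add (If.const_mul _)),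
      intervalIntegral.integral_add (IB.const_mul 2) (If.const_mul _),
      intervalIntegral.integral_const_mul, intervalIntegral.integral_const_mul,
      intervalIntegral.integral_const_mul, integral_fbar_sub f hf]
    unfold Dfun Afun Bfun
    ring
  rw [hD]
  have hr : riskL f θ = ∫ s in (0:ℝ)..1, (θ 2 * (sigma3 θ s - mfun θ) + fbar f - f s)^2 := rfl
  have hA : Afun θ = ∫ s in (0:ℝ)..1, (sigma3 θ s - mfun θ)^2 := rfl
  rw [hr, hA]
  ring
lemma gradcoord (F : E3 → ℝ) (θ : E3) (hF : DifferentiableAt ℝ F θ) (d : ℝ)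
    (hd : HasDerivAt (fun u : ℝ => F (θ + u • e2)) d 0) : gradient F θ 2 = d := by
  have hc : HasDerivAt (fun u : ℝ => θ + u • e2) e2 0 := by
    simpa using ((hasDerivAt_id (0:ℝ)).smul_const e2).const_add θ
  have h0 : θ + (0:ℝ) • e2 = θ := by simp
  have hF' : HasFDerivAt F (fderiv ℝ F θ) (θ + (0:ℝ) • e2) := h0.symm ▸ hF.hasFDerivAt
  have h1 : HasDerivAt (fun u : ℝ => F (θ + u • e2)) (fderiv ℝ F θ e2) 0 :=
    hF'.comp_hasDerivAt (0:ℝ) hc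
  have h2 : fderiv ℝ F θ e2 = d := h1.unique hd
  have h3 : fderiv ℝ F θ e2 = ⟪gradient F θ, e2⟫ := by
    rw [gradient, ← InnerProductSpace.toDual_apply_apply]; simp
  have h4 : ⟪gradient F θ, e2⟫ = gradient F θ 2 := by
    simpa [e2] using EuclideanSpace.inner_single_right (𝕜 := ℝ) 2 1 (gradient F θ)
  rw [← h4, ← h3, h2]

lemma gradL_coord (f : ℝ → ℝ) (θ : E3) (hf : ContinuousOn f (Icc 0 1))
    (hdiff : DifferentiableAt ℝ (riskL f) θ) : gradient (riskL f) θ 2 = Dfun f θ := by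
  apply gradcoord _ _ hdiff
  have hfun : (fun u : ℝ => riskL f (θ + u • e2))
      = fun u => riskL f θ + Dfun f θ * u + Afun θ * u^2 :=
    funext (riskL_expand f θ hf)
  rw [hfun]
  have h := (((hasDerivAt_id (0:ℝ)).const_mul (Dfun f θ)).const_add (riskL f θ)).add
    ((hasDerivAt_pow 2 (0:ℝ)).const_mul (Afun θ))
  exact h.congr_deriv (by norm_num)

lemma gfun_diff (θ : E3) : DifferentiableAt ℝ gfun θ := by
  have h0 : DifferentiableAt ℝ (fun θ : E3 => θ 0) θ :=
    (EuclideanSpace.proj (0 : Fin 3) : E3 →L[ℝ] ℝ).differentiableAt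
  have h1 : DifferentiableAt ℝ (fun θ : E3 => θ 1) θ :=
    (EuclideanSpace.proj (1 : Fin 3) : E3 →L[ℝ] ℝ).differentiableAt
  exact (h0.pow 2).add (h1.pow 2)

lemma gradg_coord (θ : E3) : gradient gfun θ 2 = 0 := by
  apply gradcoord _ _ (gfun_diff θ)
  have hfun : (fun u : ℝ => gfun (θ + u • e2)) = fun _ => gfun θ := by
    funext u; unfold gfun; rw [(coords θ u).1, (coords θ u).2.1]
  rw [hfun]
  exact hasDerivAt_const 0 _

noncomputable def clamp01 (s : ℝ) : ℝ := max 0 (min 1 s)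

lemma clamp01_mem (s : ℝ) : clamp01 s ∈ Icc (0:ℝ) 1 :=
  ⟨le_max_left _ _, max_le (by norm_num) (min_le_left _ _)⟩

lemma clamp01_eq {s : ℝ} (h : s ∈ Icc (0:ℝ) 1) : clamp01 s = s := by
  unfold clamp01; rw [min_eq_right h.2, max_eq_right h.1]

lemma clamp01_cont : Continuous clamp01 := by unfold clamp01; fun_prop

lemma coord_cont (i : Fin 3) : Continuous (fun θ : E3 => θ i) :=
  (EuclideanSpace.proj i : E3 →L[ℝ] ℝ).continuous

lemma mfun_cont : Continuous mfun := by
  unfold mfun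
  apply intervalIntegral.continuous_parametric_intervalIntegral_of_continuous' (μ := volume) _ 0 1
  apply Continuous.max _ continuous_const
  exact (((coord_cont 0).comp continuous_fst).mul continuous_snd).add
    ((coord_cont 1).comp continuous_fst)

lemma sigma3_cont2 : Continuous (Function.uncurry sigma3) := by
  unfold sigma3 Function.uncurry
  apply Continuous.max _ continuous_const
  exact (((coord_cont 0).comp continuous_fst).mul continuous_snd).add
    ((coord_cont 1).comp continuous_fst)

lemma Afun_cont : Continuous Afun := by
  unfold Afun
  apply intervalIntegral.continuous_parametric_intervalIntegral_of_continuous' (μ := volume) _ 0 1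
  exact (sigma3_cont2.sub (mfun_cont.comp continuous_fst)).pow 2

lemma Bfun_cont (g : ℝ → ℝ) (hg : Continuous g) : Continuous (Bfun g) := by
  unfold Bfun
  apply intervalIntegral.continuous_parametric_intervalIntegral_of_continuous' (μ := volume) _ 0 1
  exact sigma3_cont2.mul (continuous_const.sub (hg.comp continuous_snd))

lemma Dfun_cont (g : ℝ → ℝ) (hg : Continuous g) : Continuous (Dfun g) := by
  unfold Dfun
  exact ((continuous_const.mul (coord_cont 2)).mul Afun_cont).add
    (continuous_const.mul (Bfun_cont g hg))

lemma Afun_nonneg (θ : E3) : 0 ≤ Afun θ :=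
  intervalIntegral.integral_nonneg (by norm_num) (fun u _ => sq_nonneg _)

/-- Lemma 3.11: if `f̄ < f(1)`, then there exists `ε ∈ (0, 1/2)` such that `|Θ₃(t)|²` is
non-increasing at every time `t` with `∅ ≠ I^{Θ(t)} ⊆ [1-ε, 1]` and `Θ₃(t) ≤ 0`. -/
theorem stmt15
    (f : ℝ → ℝ) (hf : ContinuousOn f (Set.Icc 0 1))
    (hfbar : fbar f < f 1)
    (h𝓛diff : ∀ θ : EuclideanSpace ℝ (Fin 3), 0 < |θ 0| + |θ 1| →
      DifferentiableAt ℝ (riskL f) θ)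
    (𝔊 : EuclideanSpace ℝ (Fin 3) → EuclideanSpace ℝ (Fin 3))
    (h𝔊meas : Measurable 𝔊)
    (h𝔊loc : ∀ θ : EuclideanSpace ℝ (Fin 3),
      ∃ r > (0:ℝ), ∃ C : ℝ, ∀ x ∈ Metric.ball θ r, ‖𝔊 x‖ ≤ C)
    (h𝔊 : ∀ θ : EuclideanSpace ℝ (Fin 3), 0 < |θ 0| + |θ 1| →
      𝔊 θ = gradient (riskL f) θ -
        ((‖gradient gfun θ‖ ^ 2)⁻¹ * ⟪gradient (riskL f) θ, gradient gfun θ⟫) •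
          gradient gfun θ)
    (Θ : ℝ → EuclideanSpace ℝ (Fin 3))
    (hΘ0 : gfun (Θ 0) = 1)
    (hΘint : ∀ t : ℝ, 0 ≤ t → IntervalIntegrable (fun u => 𝔊 (Θ u)) volume 0 t)
    (hΘ : ∀ t : ℝ, 0 ≤ t → Θ t = Θ 0 - ∫ u in (0:ℝ)..t, 𝔊 (Θ u)) :
    ∃ ε ∈ Set.Ioo (0:ℝ) (1/2), ∀ t : ℝ, 0 ≤ t →
      (Iact (Θ t)).Nonempty → Iact (Θ t) ⊆ Set.Icc (1 - ε) 1 → Θ t 2 ≤ 0 →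
      ∃ v : ℝ, v ≤ 0 ∧ HasDerivWithinAt (fun u => |Θ u 2| ^ 2) v (Set.Ici 0) t := by
  -- continuous extension of f
  set fc : ℝ → ℝ := fun s => f (clamp01 s) with hfc_def
  have hfc : Continuous fc := hf.comp_continuous clamp01_cont clamp01_mem
  have hfceq : ∀ s ∈ Icc (0:ℝ) 1, fc s = f s := fun s hs => by rw [hfc_def]; simp [clamp01_eq hs]
  have hfbarc : fbar fc = fbar f := by
    unfold fbar
    apply intervalIntegral.integral_congr
    rw [uIcc01]; exact hfceq
  have hBeq : ∀ θ : E3, Bfun f θ = Bfun fc θ := by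
    intro θ
    unfold Bfun
    apply intervalIntegral.integral_congr
    rw [uIcc01]
    intro s hs
    simp only [hfbarc, hfceq s hs]
  have hDeq : ∀ θ : E3, Dfun f θ = Dfun fc θ := by
    intro θ; unfold Dfun; rw [hBeq]
  -- coordinate formula for 𝔊
  have hGc : ∀ θ : E3, 0 < |θ 0| + |θ 1| → 𝔊 θ 2 = Dfun fc θ := by
    intro θ hθ
    rw [h𝔊 θ hθ]
    have h1 : (gradient (riskL f) θ -
        ((‖gradient gfun θ‖ ^ 2)⁻¹ * ⟪gradient (riskL f) θ, gradient gfun θ⟫) •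
          gradient gfun θ) 2
        = gradient (riskL f) θ 2 -
          ((‖gradient gfun θ‖ ^ 2)⁻¹ * ⟪gradient (riskL f) θ, gradient gfun θ⟫) *
            gradient gfun θ 2 := by simp
    rw [h1, gradg_coord, gradL_coord f θ hf (h𝓛diff θ hθ), hDeq]
    ring
  -- choice of ε
  have hpos : 0 < f 1 - fbar f := sub_pos.mpr hfbar
  have h1mem : (1:ℝ) ∈ Icc (0:ℝ) 1 := ⟨by norm_num, le_rfl⟩
  obtain ⟨δ, hδ, hδ'⟩ := Metric.continuousWithinAt_iff.mp (hf 1 h1mem) _ hpos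
  refine ⟨min (δ/2) (1/4), ⟨by positivity, by
    have := min_le_right (δ/2) (1/4:ℝ); linarith⟩, ?_⟩
  set ε := min (δ/2) (1/4) with hε_def
  have hε4 : ε ≤ 1/4 := min_le_right _ _
  have hεδ : ε < δ := lt_of_le_of_lt (min_le_left _ _) (by linarith)
  have hkey : ∀ s ∈ Icc (1-ε) 1, fbar f < f s := by
    intro s hs
    have hs01 : s ∈ Icc (0:ℝ) 1 := ⟨by linarith [hs.1], hs.2⟩
    have hdist : dist s 1 < δ := by
      rw [Real.dist_eq, abs_sub_lt_iff]
      constructor <;> [linarith [hs.2]; linarith [hs.1]]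
    have := hδ' hs01 hdist
    rw [Real.dist_eq, abs_sub_lt_iff] at this
    linarith [this.1, this.2]
  -- main argument
  intro t ht hne hsub hθ2
  have hU : 0 < |Θ t 0| + |Θ t 1| := by
    obtain ⟨s₀, hs₀mem, hs₀⟩ := hne
    by_contra h
    push_neg at h
    have ha := abs_nonneg (Θ t 0)
    have hb := abs_nonneg (Θ t 1)
    have h00 : Θ t 0 = 0 := abs_eq_zero.mp (by linarith)
    have h01 : Θ t 1 = 0 := abs_eq_zero.mp (by linarith)
    rw [h00, h01] at hs₀
    simp at hs₀
  -- integrability of third coordinate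
  have hint : ∀ T : ℝ, 0 ≤ T → IntervalIntegrable (fun u => 𝔊 (Θ u) 2) volume 0 T := by
    intro T hT
    have h := hΘint T hT
    exact ⟨(EuclideanSpace.proj (2:Fin 3) : E3 →L[ℝ] ℝ).integrable_comp h.1,
      (EuclideanSpace.proj (2:Fin 3) : E3 →L[ℝ] ℝ).integrable_comp h.2⟩
  -- coordinate evolution equation
  have hcoord : ∀ u : ℝ, 0 ≤ u → Θ u 2 = Θ 0 2 - ∫ x in (0:ℝ)..u, 𝔊 (Θ x) 2 := by
    intro u hu
    have h2 : ∫ x in (0:ℝ)..u, 𝔊 (Θ x) 2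
        = (EuclideanSpace.proj (2:Fin 3) : E3 →L[ℝ] ℝ) (∫ x in (0:ℝ)..u, 𝔊 (Θ x)) :=
      ((EuclideanSpace.proj (2:Fin 3) : E3 →L[ℝ] ℝ).intervalIntegral_comp_comm
        (hΘint u hu))
    rw [hΘ u hu, h2]
    simp
  -- continuity of Θ within Ici 0 at t
  have hΘcont : ContinuousWithinAt Θ (Ici 0) t := by
    have hP : ContinuousOn (fun u => ∫ x in (0:ℝ)..u, 𝔊 (Θ x)) (uIcc 0 (t+1)) :=
      intervalIntegral.continuousOn_primitive_interval' (hΘint (t+1) (by linarith))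
        left_mem_uIcc
    rw [uIcc_of_le (by linarith)] at hP
    have h1 : ContinuousWithinAt (fun u => Θ 0 - ∫ x in (0:ℝ)..u, 𝔊 (Θ x)) (Icc 0 (t+1)) t :=
      continuousWithinAt_const.sub (hP t ⟨ht, by linarith⟩)
    have h2 : ContinuousWithinAt (fun u => Θ 0 - ∫ x in (0:ℝ)..u, 𝔊 (Θ x))
        (Ici 0 ∩ Iio (t+1)) t := h1.mono (fun x hx => ⟨hx.1, hx.2.le⟩)
    have h3 : ContinuousWithinAt (fun u => Θ 0 - ∫ x in (0:ℝ)..u, 𝔊 (Θ x)) (Ici 0) t :=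
      (continuousWithinAt_inter (Iio_mem_nhds (by linarith))).mp h2
    exact h3.congr (fun u hu => hΘ u hu) (hΘ t ht)
  -- continuity of third coordinate of 𝔊 ∘ Θ
  have hUopen : IsOpen {θ : E3 | 0 < |θ 0| + |θ 1|} :=
    isOpen_lt continuous_const (((coord_cont 0).abs).add ((coord_cont 1).abs))
  have hev : ∀ᶠ u in nhdsWithin t (Ici 0), 𝔊 (Θ u) 2 = Dfun fc (Θ u) := by
    have hmem : Θ ⁻¹' {θ : E3 | 0 < |θ 0| + |θ 1|} ∈ nhdsWithin t (Ici 0) :=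
      hΘcont (hUopen.mem_nhds hU)
    filter_upwards [hmem] with u hu using hGc (Θ u) hu
  have hcont_h : ContinuousWithinAt (fun u => 𝔊 (Θ u) 2) (Ici 0) t := by
    have h1 : Filter.Tendsto (fun u => Dfun fc (Θ u)) (nhdsWithin t (Ici 0))
        (nhds (Dfun fc (Θ t))) := ((Dfun_cont fc hfc).tendsto (Θ t)).comp hΘcont
    have h2 : Filter.Tendsto (fun u => 𝔊 (Θ u) 2) (nhdsWithin t (Ici 0))
        (nhds (Dfun fc (Θ t))) := h1.congr' (hev.mono fun u h => h.symm)
    rw [ContinuousWithinAt, hGc (Θ t) hU]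
    exact h2
  -- FTC
  have P : HasDerivWithinAt (fun u => ∫ x in (0:ℝ)..u, 𝔊 (Θ x) 2) (𝔊 (Θ t) 2) (Ici 0) t := by
    rcases eq_or_lt_of_le ht with ht0 | ht'
    · subst ht0
      exact intervalIntegral.integral_hasDerivWithinAt_right (hint 0 le_rfl)
        ⟨Ioc 0 1, Ioc_mem_nhdsGT_of_mem ⟨le_rfl, by norm_num⟩,
          (hint 1 zero_le_one).1.aestronglyMeasurable⟩
        (hcont_h.mono Ioi_subset_Ici_self)
    · exact (intervalIntegral.integral_hasDerivAt_right (hint t ht)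
        ⟨Ioo 0 (t+1), Ioo_mem_nhds ht' (by linarith),
          ((hint (t+1) (by linarith)).1.aestronglyMeasurable).mono_measure
            (Measure.restrict_mono Ioo_subset_Ioc_self le_rfl)⟩
        (hcont_h.continuousAt (Ici_mem_nhds ht'))).hasDerivWithinAt
  have h2 : HasDerivWithinAt (fun u => Θ 0 2 - ∫ x in (0:ℝ)..u, 𝔊 (Θ x) 2)
      (-(𝔊 (Θ t) 2)) (Ici 0) t := P.const_sub _
  have h3 : HasDerivWithinAt (fun u => Θ u 2) (-(𝔊 (Θ t) 2)) (Ici 0) t :=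
    h2.congr (fun u hu => hcoord u hu) (hcoord t ht)
  have h4 := h3.pow 2
  refine ⟨(2:ℕ) * Θ t 2 ^ (2 - 1) * -(𝔊 (Θ t) 2), ?_, ?_⟩
  · -- sign
    rw [hGc (Θ t) hU]
    have hA : 0 ≤ Afun (Θ t) := Afun_nonneg _
    have hB : Bfun f (Θ t) ≤ 0 := by
      unfold Bfun
      have hIB : IntervalIntegrable (fun s => sigma3 (Θ t) s * (fbar f - f s)) volume 0 1 := by
        apply ContinuousOn.intervalIntegrable; rw [uIcc01]
        exact (sigma3_cont (Θ t)).continuousOn.mul (continuousOn_const.sub hf)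
      have hmono := intervalIntegral.integral_mono_on (by norm_num : (0:ℝ) ≤ 1) hIB
        intervalIntegrable_const (g := fun _ => (0:ℝ)) ?_
      · simpa using hmono
      · intro s hs
        rcases le_or_gt (Θ t 0 * s + Θ t 1) 0 with hle | hlt
        · unfold sigma3; rw [max_eq_right hle]; simp
        · have hsI : s ∈ Iact (Θ t) := ⟨hs, hlt⟩
          have hfs := hkey s (hsub hsI)
          apply mul_nonpos_of_nonneg_of_nonpos
          · exact le_max_right _ _
          · linarith
    have hB' : Bfun fc (Θ t) ≤ 0 := (hBeq (Θ t)) ▸ hB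
    have hD : Dfun fc (Θ t) ≤ 0 := by
      unfold Dfun; nlinarith
    have : Θ t 2 ^ (2-1) = Θ t 2 := by norm_num
    rw [this]
    push_cast
    nlinarith [mul_nonneg (neg_nonneg.2 hθ2) (neg_nonneg.2 hD)]
  · have hsq : (fun u => |Θ u 2| ^ 2) = fun u => (Θ u 2) ^ 2 := by
      funext u; rw [sq_abs]
    rw [hsq]
    exact h4
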